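/- There exists n₀ ∈ ℕ such that for every n ≥ n₀ the following holds. Let v* ∈ G_{n+1} and let φ : G_{n+1} → ℕ satisfy φ(x) ≤ 200·2^n for all x ∈ G_{n+1}, and suppose every small cube C(v,w) in G_{n+1} other than the singleton cube C(v*,v*) admits a dominating direction with respect to φ. Then the high-degree imitation game associated with φ has a unique mixed Nash equilibrium: the pure strategy profile in which every player A_i and every player B_i plays v*_i with probability 1 (i.e., a = b = v*). In particular, this pure profile is a Nash equilibrium and every mixed Nash equilibrium coincides with it. -/

import Mathlib

set_option linter.unusedSectionVars false
set_option maxHeartbeats 1000000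


/-- Membership in the integer grid `G_{n+1} = {0,…,29}^{n+1}`. -/
def inGrid (n : ℕ) (x : Fin (n+1) → ℤ) : Prop := ∀ i, 0 ≤ x i ∧ x i ≤ 29

/-- Membership in the (small) cube `C(v,w)`. -/
def cubeMem (n : ℕ) (v w x : Fin (n+1) → ℤ) : Prop :=
  inGrid n x ∧ ∀ i, v i ≤ x i ∧ x i ≤ w i

/-- `C(v,w)` is a small cube: `v,w ∈ G_{n+1}`, `v ≤ w`, and edge-lengths at most 4. -/
def IsSmallCube (n : ℕ) (v w : Fin (n+1) → ℤ) : Prop :=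
  inGrid n v ∧ inGrid n w ∧ (∀ i, v i ≤ w i) ∧ (∀ i, w i - v i ≤ 4)

/-- `d` is one of the `2(n+1)` directions `±e_1,…,±e_{n+1}`. -/
def IsDirection (n : ℕ) (d : Fin (n+1) → ℤ) : Prop :=
  ∃ i : Fin (n+1), d = Pi.single i 1 ∨ d = Pi.single i (-1)

/-- `d` is a dominating direction of the small cube `C(v,w)` with respect to `φ`. -/
def IsDominatingDir (n : ℕ) (φ : (Fin (n+1) → ℤ) → ℝ) (v w d : Fin (n+1) → ℤ) : Prop :=
  IsDirection n d ∧
  (∃ x, cubeMem n v w x ∧ inGrid n (x + d)) ∧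
  ∀ x, cubeMem n v w x → inGrid n (x + d) → φ x > φ (x + d)

/-- Expected utility of player `p` under an independent mixed profile `σ`. -/
noncomputable def expUtil {I : Type} [Fintype I] [DecidableEq I] {A : I → Type}
    [∀ i, Fintype (A i)] (u : I → ((∀ j, A j) → ℝ)) (σ : ∀ i, A i → ℝ) (p : I) : ℝ :=
  ∑ prof : ∀ j, A j, (∏ q, σ q (prof q)) * u p prof

/-- `σ` is a valid mixed strategy profile (a probability distribution for each player). -/
def IsMixedProfile {I : Type} {A : I → Type} [∀ i, Fintype (A i)]
    (σ : ∀ i, A i → ℝ) : Prop :=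
  (∀ i a, 0 ≤ σ i a) ∧ ∀ i, (∑ a, σ i a) = 1

/-- The pure (deterministic) mixed strategy playing `a`. -/
def purePlay {α : Type} [DecidableEq α] (a : α) : α → ℝ :=
  fun x => if x = a then 1 else 0

/-- `σ` is a mixed Nash equilibrium of the game `u`: it is a valid mixed profile and no
player can profit by deviating to any pure action. -/
def IsMixedNash {I : Type} [Fintype I] [DecidableEq I] {A : I → Type}
    [∀ i, Fintype (A i)] [∀ i, DecidableEq (A i)]
    (u : I → ((∀ j, A j) → ℝ)) (σ : ∀ i, A i → ℝ) : Prop :=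
  IsMixedProfile σ ∧
  ∀ (p : I) (a' : A p),
    expUtil u σ p ≥ expUtil u (Function.update σ p (purePlay a')) p

/-- The high-degree imitation game: players `A_1,…,A_{n+1}` (left) and `B_1,…,B_{n+1}`
(right), each choosing a coordinate in `{0,…,29}`; Alice's team gets
`-Σ (a_i - b_i)^{2n} - 2φ(a)`, Bob's team gets `-Σ (a_i - b_i)^{2n} - 2φ(b)`. -/
noncomputable def hdImitationU (n : ℕ) (φ : (Fin (n+1) → ℤ) → ℝ) :
    (Fin (n+1) ⊕ Fin (n+1)) → ((Fin (n+1) ⊕ Fin (n+1)) → Fin 30) → ℝ :=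
  fun p prof =>
    -(∑ i : Fin (n+1),
        (((prof (Sum.inl i) : ℕ) : ℝ) - ((prof (Sum.inr i) : ℕ) : ℝ)) ^ (2 * n)) -
    2 * (Sum.elim (fun _ => φ (fun i => ((prof (Sum.inl i) : ℕ) : ℤ)))
                  (fun _ => φ (fun i => ((prof (Sum.inr i) : ℕ) : ℤ))) p)

namespace HDI
variable {I : Type} [Fintype I] [DecidableEq I] {α : Type} [Fintype α] [DecidableEq α]

noncomputable def Ex (σ : I → α → ℝ) (F : (I → α) → ℝ) : ℝ :=
  ∑ prof : I → α, (∏ q, σ q (prof q)) * F prof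

lemma prod_split (σ : I → α → ℝ) (p : I) (prof : I → α) :
    (∏ q, σ q (prof q)) = σ p (prof p) * ∏ q ∈ Finset.univ.erase p, σ q (prof q) :=
  (Finset.mul_prod_erase Finset.univ _ (Finset.mem_univ p)).symm

lemma prod_update_split (σ : I → α → ℝ) (p : I) (τ : α → ℝ) (prof : I → α) :
    (∏ q, Function.update σ p τ q (prof q))
      = τ (prof p) * ∏ q ∈ Finset.univ.erase p, σ q (prof q) := by
  rw [← Finset.mul_prod_erase Finset.univ _ (Finset.mem_univ p)]
  congr 1
  · rw [Function.update_self]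
  · exact Finset.prod_congr rfl fun q hq => by
      rw [Function.update_of_ne (Finset.ne_of_mem_erase hq)]

lemma sum_coord_split (p : I) (c : α → ℝ) (G : (I → α) → ℝ) :
    ∑ prof : I → α, c (prof p) * G prof
      = ∑ a : α, c a * ∑ prof : I → α, (if prof p = a then G prof else 0) := by
  have : ∀ a : α, c a * ∑ prof : I → α, (if prof p = a then G prof else 0)
      = ∑ prof : I → α, (if prof p = a then c a * G prof else 0) := by
    intro a
    rw [Finset.mul_sum]
    exact Finset.sum_congr rfl fun prof _ => by split <;> simp
  rw [Finset.sum_congr rfl fun a _ => this a, Finset.sum_comm]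
  apply Finset.sum_congr rfl
  intro prof _
  rw [Finset.sum_ite_eq Finset.univ (prof p) (fun a => c a * G prof)]
  simp

lemma erase_prod_update (σ : I → α → ℝ) (p : I) (a : α) (prof : I → α) :
    (∏ q ∈ Finset.univ.erase p, σ q (Function.update prof p a q))
      = ∏ q ∈ Finset.univ.erase p, σ q (prof q) :=
  Finset.prod_congr rfl fun q hq => by
    rw [Function.update_of_ne (Finset.ne_of_mem_erase hq)]

lemma sum_fiber_shift (p : I) (a b : α) (R : (I → α) → ℝ) :
    ∑ prof : I → α, (if prof p = b then R (Function.update prof p a) else 0)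
      = ∑ prof : I → α, (if prof p = a then R prof else 0) := by
  rw [← Finset.sum_filter, ← Finset.sum_filter]
  refine Finset.sum_nbij' (fun prof => Function.update prof p a)
    (fun prof => Function.update prof p b) ?_ ?_ ?_ ?_ ?_
  · intro prof hp
    simp only [Finset.mem_filter, Finset.mem_univ, true_and] at *
    exact Function.update_self p a prof
  · intro prof hp
    simp only [Finset.mem_filter, Finset.mem_univ, true_and] at *
    exact Function.update_self p b prof
  · intro prof hp
    simp only [Finset.mem_filter, Finset.mem_univ, true_and] at hp
    show Function.update (Function.update prof p a) p b = prof
    rw [Function.update_idem, ← hp, Function.update_eq_self]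
  · intro prof hp
    simp only [Finset.mem_filter, Finset.mem_univ, true_and] at hp
    show Function.update (Function.update prof p b) p a = prof
    rw [Function.update_idem, ← hp, Function.update_eq_self]
  · intro prof _
    rfl

lemma Ex_update (σ : I → α → ℝ) (h1 : ∀ q, ∑ a, σ q a = 1) (p : I) (τ : α → ℝ)
    (F : (I → α) → ℝ) :
    Ex (Function.update σ p τ) F
      = ∑ a : α, τ a * Ex σ (fun prof => F (Function.update prof p a)) := by
  have hEx2 : ∀ a : α, Ex σ (fun prof => F (Function.update prof p a))
      = ∑ prof : I → α, (if prof p = a then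
          (∏ q ∈ Finset.univ.erase p, σ q (prof q)) * F prof else 0) := by
    intro a
    unfold Ex
    calc ∑ prof : I → α, (∏ q, σ q (prof q)) * F (Function.update prof p a)
        = ∑ prof : I → α, σ p (prof p) *
            ((∏ q ∈ Finset.univ.erase p, σ q (prof q)) * F (Function.update prof p a)) := by
          refine Finset.sum_congr rfl fun prof _ => ?_
          rw [prod_split σ p prof, mul_assoc]
      _ = ∑ b : α, σ p b * ∑ prof : I → α, (if prof p = b then
            (∏ q ∈ Finset.univ.erase p, σ q (prof q)) * F (Function.update prof p a) else 0) :=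
          sum_coord_split p (σ p)
            (fun prof => (∏ q ∈ Finset.univ.erase p, σ q (prof q)) * F (Function.update prof p a))
      _ = ∑ b : α, σ p b * ∑ prof : I → α, (if prof p = a then
            (∏ q ∈ Finset.univ.erase p, σ q (prof q)) * F prof else 0) := by
          refine Finset.sum_congr rfl fun b _ => ?_
          congr 1
          have : ∀ prof : I → α, (if prof p = b then
              (∏ q ∈ Finset.univ.erase p, σ q (prof q)) * F (Function.update prof p a) else 0)
              = (if prof p = b then
              ((∏ q ∈ Finset.univ.erase p, σ q (Function.update prof p a q))
                * F (Function.update prof p a)) else 0) := by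
            intro prof
            rw [erase_prod_update]
          rw [Finset.sum_congr rfl fun prof _ => this prof]
          exact sum_fiber_shift p a b
            (fun prof => (∏ q ∈ Finset.univ.erase p, σ q (prof q)) * F prof)
      _ = ∑ prof : I → α, (if prof p = a then
            (∏ q ∈ Finset.univ.erase p, σ q (prof q)) * F prof else 0) := by
          rw [← Finset.sum_mul, h1 p, one_mul]
  calc Ex (Function.update σ p τ) F
      = ∑ prof : I → α, τ (prof p) *
          ((∏ q ∈ Finset.univ.erase p, σ q (prof q)) * F prof) := by
        unfold Ex
        refine Finset.sum_congr rfl fun prof _ => ?_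
        rw [prod_update_split σ p τ prof, mul_assoc]
    _ = ∑ a : α, τ a * ∑ prof : I → α, (if prof p = a then
          (∏ q ∈ Finset.univ.erase p, σ q (prof q)) * F prof else 0) :=
        sum_coord_split p τ _
    _ = ∑ a : α, τ a * Ex σ (fun prof => F (Function.update prof p a)) := by
        refine Finset.sum_congr rfl fun a _ => ?_
        rw [hEx2 a]

lemma Ex_marg (σ : I → α → ℝ) (h1 : ∀ q, ∑ a, σ q a = 1) (p : I) (F : (I → α) → ℝ) :
    Ex σ F = ∑ a : α, σ p a * Ex σ (fun prof => F (Function.update prof p a)) := by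
  have := Ex_update σ h1 p (σ p) F
  rwa [Function.update_eq_self] at this

lemma expUtil_eq_Ex (u : I → ((I → α) → ℝ)) (σ : I → α → ℝ) (p : I) :
    expUtil u σ p = Ex σ (u p) := rfl

lemma purePlay_sum (a : α) : ∑ x : α, purePlay a x = 1 := by
  simp [purePlay]

lemma expUtil_update_pure (u : I → ((I → α) → ℝ)) (σ : I → α → ℝ)
    (h1 : ∀ q, ∑ a, σ q a = 1) (p : I) (a : α) :
    expUtil u (Function.update σ p (purePlay a)) p
      = Ex σ (fun prof => u p (Function.update prof p a)) := by
  rw [expUtil_eq_Ex, Ex_update σ h1 p (purePlay a) (u p)]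
  unfold purePlay
  rw [Finset.sum_congr rfl (fun b _ => by rw [ite_mul, one_mul, zero_mul]),
    Finset.sum_ite_eq' Finset.univ a (fun b => Ex σ fun prof => u p (Function.update prof p b))]
  simp

lemma suppOpt {u : I → ((I → α) → ℝ)} {σ : I → α → ℝ}
    (hσ : IsMixedNash u σ) (p : I) (k : α) (hk : σ p k ≠ 0) (j : α) :
    Ex σ (fun prof => u p (Function.update prof p j))
      ≤ Ex σ (fun prof => u p (Function.update prof p k)) := by
  obtain ⟨⟨h0, h1⟩, hbr⟩ := hσ
  set W : α → ℝ := fun a => Ex σ (fun prof => u p (Function.update prof p a)) with hW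
  have hC : expUtil u σ p = ∑ a : α, σ p a * W a := by
    rw [expUtil_eq_Ex]; exact Ex_marg σ h1 p (u p)
  have hle : ∀ a : α, W a ≤ ∑ b : α, σ p b * W b := by
    intro a
    have := hbr p a
    rw [hC, expUtil_update_pure u σ h1 p a] at this
    exact this
  show W j ≤ W k
  by_contra hlt
  push_neg at hlt
  obtain ⟨m, _, hm⟩ := Finset.exists_max_image Finset.univ W ⟨k, Finset.mem_univ k⟩
  have hkm : W k < W m := lt_of_lt_of_le hlt (hm j (Finset.mem_univ j))
  have hkpos : 0 < σ p k := lt_of_le_of_ne (h0 p k) (Ne.symm hk)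
  have hsum : ∑ b : α, σ p b * W b < ∑ b : α, σ p b * W m := by
    apply Finset.sum_lt_sum
    · intro b _
      exact mul_le_mul_of_nonneg_left (hm b (Finset.mem_univ b)) (h0 p b)
    · exact ⟨k, Finset.mem_univ k, by
        exact (mul_lt_mul_iff_right₀ hkpos).mpr hkm⟩
  rw [← Finset.sum_mul, h1 p, one_mul] at hsum
  exact absurd (hle m) (not_le_of_gt hsum)

end HDI

namespace HDIA

lemma pow215 {n : ℕ} (hn : 15 ≤ n) : (32768:ℝ) ≤ 2^n := by
  calc (32768:ℝ) = 2^15 := by norm_num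
    _ ≤ 2^n := pow_le_pow_right₀ one_le_two hn

lemma ratio_pow {n : ℕ} (hn : 15 ≤ n) : (2:ℝ) ≤ (30/29)^(2*n) := by
  have h := one_add_mul_le_pow (a := (1/29:ℝ)) (by norm_num) (2*n)
  have hc : (2:ℝ) ≤ 1 + (2*n) * (1/29) := by
    have : (15:ℝ) ≤ n := by exact_mod_cast hn
    push_cast
    linarith
  calc (2:ℝ) ≤ 1 + (2*n) * (1/29) := hc
    _ ≤ (1 + 1/29)^(2*n) := by push_cast at h ⊢; linarith
    _ = (30/29)^(2*n) := by norm_num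

lemma gap_half {n : ℕ} (hn : 15 ≤ n) {x : ℝ} (h2 : 2 ≤ x) (h30 : x ≤ 30) :
    x^(2*n)/2 ≤ x^(2*n) - (x-1)^(2*n) := by
  have ha1 : (1:ℝ) ≤ x - 1 := by linarith
  have hkey : ((x-1) * (30/29))^(2*n) ≤ x^(2*n) := by
    apply pow_le_pow_left₀ (by positivity)
    nlinarith
  rw [mul_pow] at hkey
  have hb : 2 * (x-1)^(2*n) ≤ (x-1)^(2*n) * (30/29)^(2*n) := by
    have := mul_le_mul_of_nonneg_left (ratio_pow hn) (pow_nonneg (by linarith : (0:ℝ) ≤ x - 1) (2*n))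
    linarith
  linarith

lemma gap_gem1 {n : ℕ} {x : ℝ} (h0 : 0 ≤ x) : -1 ≤ x^(2*n) - (x-1)^(2*n) := by
  have he : Even (2*n) := even_two_mul n
  rcases le_or_gt x 1 with h | h
  · have h1 : (x-1)^(2*n) ≤ 1 := by
      rw [← he.pow_abs]
      exact pow_le_one₀ (abs_nonneg _) (abs_le.mpr ⟨by linarith, by linarith⟩)
    have h2 : 0 ≤ x^(2*n) := he.pow_nonneg x
    linarith
  · have h1 : (x-1)^(2*n) ≤ x^(2*n) := pow_le_pow_left₀ (by linarith) (by linarith) _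
    linarith

lemma gap_ge_pow {n : ℕ} (hn : 15 ≤ n) {c : ℝ} {x : ℝ} (hc : 2 ≤ c) (h2 : c ≤ x) (h30 : x ≤ 30) :
    c^(2*n)/2 ≤ x^(2*n) - (x-1)^(2*n) := by
  have := gap_half hn (le_trans hc h2) h30
  have hmono : c^(2*n) ≤ x^(2*n) := pow_le_pow_left₀ (by linarith) h2 _
  linarith

/-- combined two-gap bound used in the narrowness step -/
lemma gapG {n : ℕ} (hn : 15 ≤ n) (s t : ℤ) (hs : -1 ≤ s) (ht : -1 ≤ t)
    (hst : 3 ≤ s + t) (hs30 : s ≤ 30) (ht30 : t ≤ 30) :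
    800*(2:ℝ)^n + 1 ≤ ((s:ℝ)^(2*n) - ((s:ℝ)-1)^(2*n)) + ((t:ℝ)^(2*n) - ((t:ℝ)-1)^(2*n)) := by
  have hQ : (32768:ℝ) ≤ 2^n := pow215 hn
  have hQpos : (0:ℝ) < 2^n := by positivity
  set Q : ℝ := 2^n with hQdef
  have hQQ : ((2:ℝ))^(2*n) = Q^2 := by rw [mul_comm 2 n, pow_mul]
  have hQ4 : ((4:ℝ))^(2*n) = Q^4 := by
    have : (4:ℝ) = 2^2 := by norm_num
    rw [this, ← pow_mul, show 2*(2*n) = n*4 by ring, pow_mul]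
  have hmain : ∀ s t : ℤ, s ≤ t → -1 ≤ s → 3 ≤ s + t → s ≤ 30 → t ≤ 30 →
      800*Q + 1 ≤ ((s:ℝ)^(2*n) - ((s:ℝ)-1)^(2*n)) + ((t:ℝ)^(2*n) - ((t:ℝ)-1)^(2*n)) := by
    intro s t hle hs1 hst1 hs30' ht30'
    have ht2 : (2:ℤ) ≤ t := by omega
    have ht2r : (2:ℝ) ≤ (t:ℝ) := by exact_mod_cast ht2
    have ht30r : (t:ℝ) ≤ 30 := by exact_mod_cast ht30'
    have hQ2 : 32768 * Q ≤ Q * Q := by nlinarith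
    rcases show (1 ≤ s) ∨ s = 0 ∨ s = -1 by omega with h1 | h0 | hm1
    · -- s ≥ 1 : gap s ≥ 0
      have h1r : (1:ℝ) ≤ (s:ℝ) := by exact_mod_cast h1
      have hgs : ((s:ℝ)-1)^(2*n) ≤ (s:ℝ)^(2*n) := pow_le_pow_left₀ (by linarith) (by linarith) _
      have hgt := gap_ge_pow hn (le_refl (2:ℝ)) ht2r ht30r
      rw [hQQ] at hgt
      nlinarith
    · subst h0
      have hgt := gap_ge_pow hn (le_refl (2:ℝ)) ht2r ht30r
      rw [hQQ] at hgt
      have hzero : ((0:ℤ):ℝ)^(2*n) = 0 := by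
        norm_num
        positivity
      have hone : (((0:ℤ):ℝ)-1)^(2*n) = 1 := by
        norm_num [Even.neg_one_pow (even_two_mul n)]
      rw [hzero, hone]
      nlinarith
    · subst hm1
      have ht4 : (4:ℝ) ≤ (t:ℝ) := by
        have : (4:ℤ) ≤ t := by omega
        exact_mod_cast this
      have hgt := gap_ge_pow hn (by norm_num : (2:ℝ) ≤ 4) ht4 ht30r
      rw [hQ4] at hgt
      have hs0 : (((-1:ℤ)):ℝ)^(2*n) = 1 := by
        norm_num [Even.neg_one_pow (even_two_mul n)]
      have hs1' : ((((-1:ℤ)):ℝ)-1)^(2*n) = Q^2 := by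
        have : ((((-1:ℤ)):ℝ)-1) = -2 := by norm_num
        rw [this, (even_two_mul n).neg_pow, hQQ]
      rw [hs0, hs1']
      nlinarith [sq_nonneg Q, sq_nonneg (Q*Q), mul_le_mul_of_nonneg_left hQ2 (le_of_lt hQpos)]
  rcases le_total s t with h | h
  · exact hmain s t h hs hst hs30 ht30
  · have := hmain t s h ht (by omega) ht30 hs30
    linarith

/-- single gap vs the φ budget, used in the support-containment step -/
lemma gap1 {n : ℕ} (hn : 15 ≤ n) {x : ℝ} (h2 : 2 ≤ x) (h30 : x ≤ 30) :
    400*(2:ℝ)^n + 1 ≤ x^(2*n) - (x-1)^(2*n) := by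
  have hQ : (32768:ℝ) ≤ 2^n := pow215 hn
  have hQpos : (0:ℝ) < 2^n := by positivity
  have hgt := gap_ge_pow hn (le_refl (2:ℝ)) h2 h30
  have hQQ : ((2:ℝ))^(2*n) = 2^n*2^n := by rw [mul_comm 2 n, pow_mul]; ring
  rw [hQQ] at hgt
  nlinarith
end HDIA

namespace HDIG

variable {n : ℕ}

abbrev Pl (n : ℕ) := Sum (Fin (n+1)) (Fin (n+1))

def opp : Pl n → Pl n := Sum.elim Sum.inr Sum.inl

def idx : Pl n → Fin (n+1) := Sum.elim id id

def cz (x : Fin 30) : ℤ := ((x : ℕ) : ℤ)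

def cr (x : Fin 30) : ℝ := ((x : ℕ) : ℝ)

def vecOf (prof : Pl n → Fin 30) (p : Pl n) : Fin (n+1) → ℤ :=
  Sum.elim (fun _ => fun i' => cz (prof (Sum.inl i')))
           (fun _ => fun i' => cz (prof (Sum.inr i'))) p

lemma udiff (φr : (Fin (n+1) → ℤ) → ℝ) (p : Pl n) (prof : Pl n → Fin 30) (k j : Fin 30) :
    hdImitationU n φr p (Function.update prof p k)
      - hdImitationU n φr p (Function.update prof p j)
    = -((cr k - cr (prof (opp p)))^(2*n) - (cr j - cr (prof (opp p)))^(2*n))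
      - 2*(φr (Function.update (vecOf prof p) (idx p) (cz k))
           - φr (Function.update (vecOf prof p) (idx p) (cz j))) := by
  rcases p with i | i
  · have hb : ∀ (c : Fin 30) (i' : Fin (n+1)),
        (Function.update prof (Sum.inl i) c) (Sum.inr i') = prof (Sum.inr i') := by
      intro c i'; exact Function.update_of_ne (by simp) _ _
    have ha : ∀ (c : Fin 30) (i' : Fin (n+1)),
        (Function.update prof (Sum.inl i) c) (Sum.inl i')
          = if i' = i then c else prof (Sum.inl i') := by
      intro c i'
      rw [Function.update_apply]
      simp [Sum.inl.injEq]
    have hvec : ∀ c : Fin 30,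
        (fun i' => (((Function.update prof (Sum.inl i) c) (Sum.inl i') : ℕ) : ℤ))
          = Function.update (vecOf prof (Sum.inl i)) i (cz c) := by
      intro c
      funext i'
      rw [ha]
      by_cases h : i' = i
      · subst h; simp [cz]
      · simp [h, vecOf, cz, Function.update_of_ne h]
    have hsum : ∀ c : Fin 30,
        (∑ i' : Fin (n+1),
          ((((Function.update prof (Sum.inl i) c) (Sum.inl i') : ℕ) : ℝ)
            - (((Function.update prof (Sum.inl i) c) (Sum.inr i') : ℕ) : ℝ)) ^ (2*n))
        = (cr c - cr (prof (Sum.inr i)))^(2*n)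
          + ∑ i' ∈ Finset.univ.erase i,
              ((((prof (Sum.inl i')) : ℕ) : ℝ) - (((prof (Sum.inr i')) : ℕ) : ℝ))^(2*n) := by
      intro c
      rw [← Finset.add_sum_erase _ _ (Finset.mem_univ i)]
      congr 1
      · rw [ha, hb]; simp [cr]
      · refine Finset.sum_congr rfl fun i' hi' => ?_
        rw [ha, hb, if_neg (Finset.ne_of_mem_erase hi')]
    show _ = _
    simp only [hdImitationU, Sum.elim_inl]
    rw [hsum k, hsum j, hvec k, hvec j]
    show _ = -((cr k - cr (prof (Sum.inr i)))^(2*n) - (cr j - cr (prof (Sum.inr i)))^(2*n))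
      - 2*(φr (Function.update (vecOf prof (Sum.inl i)) i (cz k))
           - φr (Function.update (vecOf prof (Sum.inl i)) i (cz j)))
    ring
  · have hb : ∀ (c : Fin 30) (i' : Fin (n+1)),
        (Function.update prof (Sum.inr i) c) (Sum.inl i') = prof (Sum.inl i') := by
      intro c i'; exact Function.update_of_ne (by simp) _ _
    have ha : ∀ (c : Fin 30) (i' : Fin (n+1)),
        (Function.update prof (Sum.inr i) c) (Sum.inr i')
          = if i' = i then c else prof (Sum.inr i') := by
      intro c i'
      rw [Function.update_apply]
      simp [Sum.inr.injEq]
    have hvec : ∀ c : Fin 30,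
        (fun i' => (((Function.update prof (Sum.inr i) c) (Sum.inr i') : ℕ) : ℤ))
          = Function.update (vecOf prof (Sum.inr i)) i (cz c) := by
      intro c
      funext i'
      rw [ha]
      by_cases h : i' = i
      · subst h; simp [cz]
      · simp [h, vecOf, cz, Function.update_of_ne h]
    have hsum : ∀ c : Fin 30,
        (∑ i' : Fin (n+1),
          ((((Function.update prof (Sum.inr i) c) (Sum.inl i') : ℕ) : ℝ)
            - (((Function.update prof (Sum.inr i) c) (Sum.inr i') : ℕ) : ℝ)) ^ (2*n))
        = (cr (prof (Sum.inl i)) - cr c)^(2*n)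
          + ∑ i' ∈ Finset.univ.erase i,
              ((((prof (Sum.inl i')) : ℕ) : ℝ) - (((prof (Sum.inr i')) : ℕ) : ℝ))^(2*n) := by
      intro c
      rw [← Finset.add_sum_erase _ _ (Finset.mem_univ i)]
      congr 1
      · rw [ha, hb]; simp [cr]
      · refine Finset.sum_congr rfl fun i' hi' => ?_
        rw [ha, hb, if_neg (Finset.ne_of_mem_erase hi')]
    have hflip : ∀ c : Fin 30, (cr (prof (Sum.inl i)) - cr c)^(2*n) = (cr c - cr (prof (Sum.inl i)))^(2*n) := by
      intro c
      rw [show cr (prof (Sum.inl i)) - cr c = -(cr c - cr (prof (Sum.inl i))) by ring,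
        (even_two_mul n).neg_pow]
    show _ = _
    simp only [hdImitationU, Sum.elim_inr]
    rw [hsum k, hsum j, hvec k, hvec j, hflip k, hflip j]
    show _ = -((cr k - cr (prof (Sum.inl i)))^(2*n) - (cr j - cr (prof (Sum.inl i)))^(2*n))
      - 2*(φr (Function.update (vecOf prof (Sum.inr i)) i (cz k))
           - φr (Function.update (vecOf prof (Sum.inr i)) i (cz j)))
    ring

end HDIG

namespace HDI
variable {I : Type} [Fintype I] [DecidableEq I] {α : Type} [Fintype α] [DecidableEq α]

lemma sum_prod_one {σ : I → α → ℝ} (h1 : ∀ q, ∑ a, σ q a = 1) :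
    ∑ prof : I → α, ∏ q, σ q (prof q) = 1 := by
  rw [← Fintype.prod_sum (fun (q : I) (a : α) => σ q a)]
  simp [h1]

lemma Ex_ge {σ : I → α → ℝ} (h0 : ∀ q a, 0 ≤ σ q a) (h1 : ∀ q, ∑ a, σ q a = 1)
    {F : (I → α) → ℝ} {c : ℝ}
    (h : ∀ prof : I → α, (∀ q, σ q (prof q) ≠ 0) → c ≤ F prof) : c ≤ Ex σ F := by
  have hs := sum_prod_one h1
  have hle : ∑ prof : I → α, (∏ q, σ q (prof q)) * c ≤ Ex σ F := by
    apply Finset.sum_le_sum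
    intro prof _
    rcases eq_or_ne (∏ q, σ q (prof q)) 0 with hz | hz
    · rw [hz, zero_mul, zero_mul]
    · have hpos : 0 ≤ ∏ q, σ q (prof q) := Finset.prod_nonneg fun q _ => h0 q (prof q)
      have hne : ∀ q, σ q (prof q) ≠ 0 := by
        intro q
        exact Finset.prod_ne_zero_iff.mp hz q (Finset.mem_univ q)
      exact mul_le_mul_of_nonneg_left (h prof hne) hpos
  calc c = (∑ prof : I → α, ∏ q, σ q (prof q)) * c := by rw [hs, one_mul]
    _ = ∑ prof : I → α, (∏ q, σ q (prof q)) * c := by rw [Finset.sum_mul]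
    _ ≤ Ex σ F := hle

lemma Ex_neg {σ : I → α → ℝ} (F : (I → α) → ℝ) :
    Ex σ (fun prof => -F prof) = -Ex σ F := by
  simp [Ex, mul_neg, Finset.sum_neg_distrib]

lemma Ex_congr {σ : I → α → ℝ} {F G : (I → α) → ℝ} (h : ∀ prof, F prof = G prof) :
    Ex σ F = Ex σ G := by
  unfold Ex; exact Finset.sum_congr rfl fun prof _ => by rw [h prof]

lemma Ex_pure {g : I → α} (F : (I → α) → ℝ) :
    Ex (fun q => purePlay (g q)) F = F g := by
  unfold Ex purePlay
  have h : ∀ prof : I → α, (∏ q, if prof q = g q then (1:ℝ) else 0)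
      = if prof = g then (1:ℝ) else 0 := by
    intro prof
    rw [Finset.prod_boole]
    congr 1
    simp [funext_iff]
  rw [Finset.sum_congr rfl fun prof _ => by rw [h prof]]
  simp

lemma Ex_sub {σ : I → α → ℝ} (F G : (I → α) → ℝ) :
    Ex σ (fun prof => F prof - G prof) = Ex σ F - Ex σ G := by
  simp [Ex, mul_sub, Finset.sum_sub_distrib]

lemma Ex_add' {σ : I → α → ℝ} (F G : (I → α) → ℝ) :
    Ex σ (fun prof => F prof + G prof) = Ex σ F + Ex σ G := by
  simp [Ex, mul_add, Finset.sum_add_distrib]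

end HDI

namespace HDIG

variable {n : ℕ} {φr : (Fin (n+1) → ℤ) → ℝ} {σ : Pl n → Fin 30 → ℝ}

lemma crz (x : Fin 30) : cr x = ((cz x : ℤ) : ℝ) := by simp [cr, cz]

lemma cz_nonneg (x : Fin 30) : 0 ≤ cz x := by simp [cz]

lemma cz_le29 (x : Fin 30) : cz x ≤ 29 := by
  have : (x : ℕ) ≤ 29 := Nat.lt_succ_iff.mp x.isLt
  simp [cz]; exact_mod_cast this

lemma cz_inj {x y : Fin 30} (h : cz x = cz y) : x = y := by
  unfold cz at h
  exact Fin.ext (by exact_mod_cast h)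

lemma vecOf_bounds (prof : Pl n → Fin 30) (p : Pl n) (i' : Fin (n+1)) :
    0 ≤ vecOf prof p i' ∧ vecOf prof p i' ≤ 29 := by
  rcases p with i | i <;> exact ⟨cz_nonneg _, cz_le29 _⟩

lemma grid_update (prof : Pl n → Fin 30) (p : Pl n) (i : Fin (n+1)) {z : ℤ}
    (h0 : 0 ≤ z) (h29 : z ≤ 29) :
    inGrid n (Function.update (vecOf prof p) i z) := by
  intro i'
  rw [Function.update_apply]
  split
  · exact ⟨h0, h29⟩
  · exact vecOf_bounds prof p i'

lemma opp_opp (p : Pl n) : opp (opp p) = p := by rcases p with i | i <;> rfl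

lemma idx_opp (p : Pl n) : idx (opp p) = idx p := by rcases p with i | i <;> rfl

noncomputable def ZS (σ : Pl n → Fin 30 → ℝ) (p : Pl n) : Finset ℤ :=
  (Finset.univ.filter (fun a => σ p a ≠ 0)).image cz

lemma ZS_ne (h1 : ∀ q, ∑ a, σ q a = 1) (p : Pl n) : (ZS σ p).Nonempty := by
  have : ∃ a, σ p a ≠ 0 := by
    by_contra h
    push_neg at h
    have h2 := h1 p
    rw [Finset.sum_congr rfl (fun a _ => h a)] at h2
    simp at h2
  obtain ⟨a, ha⟩ := this
  exact ⟨cz a, Finset.mem_image_of_mem cz (Finset.mem_filter.mpr ⟨Finset.mem_univ a, ha⟩)⟩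

lemma mem_ZS {p : Pl n} {a : Fin 30} (ha : σ p a ≠ 0) : cz a ∈ ZS σ p :=
  Finset.mem_image_of_mem cz (Finset.mem_filter.mpr ⟨Finset.mem_univ a, ha⟩)

lemma ZS_elem {p : Pl n} {z : ℤ} (hz : z ∈ ZS σ p) : ∃ a, σ p a ≠ 0 ∧ cz a = z := by
  obtain ⟨a, ha, rfl⟩ := Finset.mem_image.mp hz
  exact ⟨a, (Finset.mem_filter.mp ha).2, rfl⟩

lemma ZS_bounds {p : Pl n} {z : ℤ} (hz : z ∈ ZS σ p) : 0 ≤ z ∧ z ≤ 29 := by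
  obtain ⟨a, _, rfl⟩ := ZS_elem hz
  exact ⟨cz_nonneg a, cz_le29 a⟩

lemma keyIneq (hσ : IsMixedNash (hdImitationU n φr) σ) (p : Pl n) (k j : Fin 30)
    (hk : σ p k ≠ 0) :
    HDI.Ex σ (fun prof =>
      ((cr k - cr (prof (opp p)))^(2*n) - (cr j - cr (prof (opp p)))^(2*n))
        + 2*(φr (Function.update (vecOf prof p) (idx p) (cz k))
             - φr (Function.update (vecOf prof p) (idx p) (cz j)))) ≤ 0 := by
  have h := HDI.suppOpt hσ p k hk j
  have hdiff : HDI.Ex σ (fun prof => hdImitationU n φr p (Function.update prof p k)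
        - hdImitationU n φr p (Function.update prof p j))
      = HDI.Ex σ (fun prof => hdImitationU n φr p (Function.update prof p k))
        - HDI.Ex σ (fun prof => hdImitationU n φr p (Function.update prof p j)) :=
    HDI.Ex_sub _ _
  have h2 : HDI.Ex σ (fun prof => hdImitationU n φr p (Function.update prof p k)
        - hdImitationU n φr p (Function.update prof p j))
      = HDI.Ex σ (fun prof => -(((cr k - cr (prof (opp p)))^(2*n)
          - (cr j - cr (prof (opp p)))^(2*n))
        + 2*(φr (Function.update (vecOf prof p) (idx p) (cz k))
             - φr (Function.update (vecOf prof p) (idx p) (cz j))))) :=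
    HDI.Ex_congr (fun prof => by rw [udiff]; ring)
  rw [h2, HDI.Ex_neg] at hdiff
  linarith

lemma keyContra (hσ : IsMixedNash (hdImitationU n φr) σ) (p : Pl n) (k j : Fin 30)
    (hk : σ p k ≠ 0)
    (hpt : ∀ prof : Pl n → Fin 30, (∀ q, σ q (prof q) ≠ 0) →
      (1:ℝ) ≤ ((cr k - cr (prof (opp p)))^(2*n) - (cr j - cr (prof (opp p)))^(2*n))
        + 2*(φr (Function.update (vecOf prof p) (idx p) (cz k))
             - φr (Function.update (vecOf prof p) (idx p) (cz j)))) : False := by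
  have hkey := keyIneq hσ p k j hk
  have hge := HDI.Ex_ge hσ.1.1 hσ.1.2 hpt
  linarith

end HDIG

namespace HDIG

variable {n : ℕ} {φr : (Fin (n+1) → ℤ) → ℝ} {σ : Pl n → Fin 30 → ℝ}

/-- pointwise φ-difference bound from the 200·2ⁿ budget -/
lemma phi_budget (hφ0 : ∀ x, inGrid n x → 0 ≤ φr x)
    (hφB : ∀ x, inGrid n x → φr x ≤ 200*2^n)
    (prof : Pl n → Fin 30) (p : Pl n) (a b : Fin 30) :
    -(200*(2:ℝ)^n) ≤ φr (Function.update (vecOf prof p) (idx p) (cz a))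
      - φr (Function.update (vecOf prof p) (idx p) (cz b)) := by
  have h1 := hφ0 _ (grid_update prof p (idx p) (cz_nonneg a) (cz_le29 a))
  have h2 := hφB _ (grid_update prof p (idx p) (cz_nonneg b) (cz_le29 b))
  linarith

lemma step1_up (hn : 15 ≤ n)
    (hφ0 : ∀ x, inGrid n x → 0 ≤ φr x) (hφB : ∀ x, inGrid n x → φr x ≤ 200*2^n)
    (hσ : IsMixedNash (hdImitationU n φr) σ) (p : Pl n) {z : ℤ} (hz : z ∈ ZS σ p) :
    z ≤ (ZS σ (opp p)).max' (ZS_ne hσ.1.2 (opp p)) + 1 := by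
  set M := (ZS σ (opp p)).max' (ZS_ne hσ.1.2 (opp p)) with hM
  by_contra hcon
  push_neg at hcon
  have hM0 : 0 ≤ M := (ZS_bounds (Finset.max'_mem _ _)).1
  have hz29 : z ≤ 29 := (ZS_bounds hz).2
  have hzM : M + 2 ≤ z := by omega
  obtain ⟨k, hk, hkz⟩ := ZS_elem hz
  have hk2 : 2 ≤ (k : ℕ) := by
    have : (2:ℤ) ≤ ((k:ℕ):ℤ) := by unfold cz at hkz; omega
    exact_mod_cast this
  refine keyContra hσ p k ⟨(k:ℕ) - 1, by omega⟩ hk ?_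
  intro prof hsup
  set j : Fin 30 := ⟨(k:ℕ) - 1, by omega⟩ with hj
  have hcj : cz j = z - 1 := by
    unfold cz at hkz ⊢
    simp only [hj]
    omega
  have hozs : cz (prof (opp p)) ∈ ZS σ (opp p) := mem_ZS (hsup (opp p))
  have hoM : cz (prof (opp p)) ≤ M := Finset.le_max' _ _ hozs
  have ho0 : 0 ≤ cz (prof (opp p)) := (ZS_bounds hozs).1
  set o := cz (prof (opp p)) with hodef
  have e1 : cr k - cr (prof (opp p)) = ((z - o : ℤ) : ℝ) := by
    rw [crz, crz, hkz]; push_cast; ring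
  have e2 : cr j - cr (prof (opp p)) = ((z - o : ℤ) : ℝ) - 1 := by
    rw [crz, crz, hcj]; push_cast; ring
  have hx2 : (2:ℝ) ≤ ((z - o : ℤ) : ℝ) := by exact_mod_cast (by omega : (2:ℤ) ≤ z - o)
  have hx30 : ((z - o : ℤ) : ℝ) ≤ 30 := by exact_mod_cast (by omega : (z - o : ℤ) ≤ 30)
  have hgap := HDIA.gap1 hn hx2 hx30
  have hphi := phi_budget hφ0 hφB prof p k j
  rw [e1, e2]
  linarith

lemma step1_down (hn : 15 ≤ n)
    (hφ0 : ∀ x, inGrid n x → 0 ≤ φr x) (hφB : ∀ x, inGrid n x → φr x ≤ 200*2^n)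
    (hσ : IsMixedNash (hdImitationU n φr) σ) (p : Pl n) {z : ℤ} (hz : z ∈ ZS σ p) :
    (ZS σ (opp p)).min' (ZS_ne hσ.1.2 (opp p)) - 1 ≤ z := by
  set m := (ZS σ (opp p)).min' (ZS_ne hσ.1.2 (opp p)) with hm
  by_contra hcon
  push_neg at hcon
  have hm29 : m ≤ 29 := (ZS_bounds (Finset.min'_mem _ _)).2
  have hz0 : 0 ≤ z := (ZS_bounds hz).1
  have hzm : z + 2 ≤ m := by omega
  obtain ⟨k, hk, hkz⟩ := ZS_elem hz
  have hk27 : (k : ℕ) ≤ 27 := by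
    have : ((k:ℕ):ℤ) ≤ 27 := by unfold cz at hkz; omega
    exact_mod_cast this
  refine keyContra hσ p k ⟨(k:ℕ) + 1, by omega⟩ hk ?_
  intro prof hsup
  set j : Fin 30 := ⟨(k:ℕ) + 1, by omega⟩ with hj
  have hcj : cz j = z + 1 := by
    unfold cz at hkz ⊢
    simp only [hj]
    omega
  have hozs : cz (prof (opp p)) ∈ ZS σ (opp p) := mem_ZS (hsup (opp p))
  have hom : m ≤ cz (prof (opp p)) := Finset.min'_le _ _ hozs
  have ho29 : cz (prof (opp p)) ≤ 29 := (ZS_bounds hozs).2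
  set o := cz (prof (opp p)) with hodef
  have he : Even (2*n) := even_two_mul n
  have e1 : (cr k - cr (prof (opp p)))^(2*n) = (((o - z : ℤ) : ℝ))^(2*n) := by
    rw [crz, crz, hkz]
    rw [show ((z:ℝ) - (o:ℝ)) = -(((o - z : ℤ):ℝ)) by push_cast; ring]
    rw [he.neg_pow]
  have e2 : (cr j - cr (prof (opp p)))^(2*n) = (((o - z : ℤ) : ℝ) - 1)^(2*n) := by
    rw [crz, crz, hcj]
    rw [show (((z + 1 : ℤ):ℝ) - ((o:ℤ):ℝ)) = -((((o - z : ℤ):ℝ)) - 1) by push_cast; ring]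
    rw [he.neg_pow]
  have hx2 : (2:ℝ) ≤ ((o - z : ℤ) : ℝ) := by exact_mod_cast (by omega : (2:ℤ) ≤ o - z)
  have hx30 : ((o - z : ℤ) : ℝ) ≤ 30 := by exact_mod_cast (by omega : (o - z : ℤ) ≤ 30)
  have hgap := HDIA.gap1 hn hx2 hx30
  have hphi := phi_budget hφ0 hφB prof p k j
  rw [e1, e2]
  linarith

lemma step2 (hn : 15 ≤ n)
    (hφ0 : ∀ x, inGrid n x → 0 ≤ φr x) (hφB : ∀ x, inGrid n x → φr x ≤ 200*2^n)
    (hσ : IsMixedNash (hdImitationU n φr) σ) (p : Pl n) :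
    (ZS σ p).max' (ZS_ne hσ.1.2 p) - (ZS σ p).min' (ZS_ne hσ.1.2 p) ≤ 2 := by
  set K := (ZS σ p).min' (ZS_ne hσ.1.2 p) with hKdef
  set K' := (ZS σ p).max' (ZS_ne hσ.1.2 p) with hK'def
  by_contra hcon
  push_neg at hcon
  have hKmem : K ∈ ZS σ p := Finset.min'_mem _ _
  have hK'mem : K' ∈ ZS σ p := Finset.max'_mem _ _
  have hK0 : 0 ≤ K := (ZS_bounds hKmem).1
  have hK29 : K' ≤ 29 := (ZS_bounds hK'mem).2
  have h3 : K + 3 ≤ K' := by omega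
  obtain ⟨k, hk, hkz⟩ := ZS_elem hKmem
  obtain ⟨k', hk', hkz'⟩ := ZS_elem hK'mem
  have hkv : ((k:ℕ):ℤ) = K := hkz
  have hkv' : ((k':ℕ):ℤ) = K' := hkz'
  set j : Fin 30 := ⟨(k:ℕ)+1, by omega⟩ with hj
  set j' : Fin 30 := ⟨(k':ℕ)-1, by omega⟩ with hj'
  have hcj : cz j = K + 1 := by unfold cz; simp only [hj]; omega
  have hcj' : cz j' = K' - 1 := by unfold cz; simp only [hj']; omega
  have hkey1 := keyIneq hσ p k j hk
  have hkey2 := keyIneq hσ p k' j' hk'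
  have hsum : HDI.Ex σ (fun prof =>
      (((cr k - cr (prof (opp p)))^(2*n) - (cr j - cr (prof (opp p)))^(2*n))
        + 2*(φr (Function.update (vecOf prof p) (idx p) (cz k))
             - φr (Function.update (vecOf prof p) (idx p) (cz j))))
      + (((cr k' - cr (prof (opp p)))^(2*n) - (cr j' - cr (prof (opp p)))^(2*n))
        + 2*(φr (Function.update (vecOf prof p) (idx p) (cz k'))
             - φr (Function.update (vecOf prof p) (idx p) (cz j')))))
      = HDI.Ex σ (fun prof =>
      ((cr k - cr (prof (opp p)))^(2*n) - (cr j - cr (prof (opp p)))^(2*n))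
        + 2*(φr (Function.update (vecOf prof p) (idx p) (cz k))
             - φr (Function.update (vecOf prof p) (idx p) (cz j))))
      + HDI.Ex σ (fun prof =>
      ((cr k' - cr (prof (opp p)))^(2*n) - (cr j' - cr (prof (opp p)))^(2*n))
        + 2*(φr (Function.update (vecOf prof p) (idx p) (cz k'))
             - φr (Function.update (vecOf prof p) (idx p) (cz j')))) := by
    unfold HDI.Ex
    rw [← Finset.sum_add_distrib]
    exact Finset.sum_congr rfl fun prof _ => by ring
  have hge : (1:ℝ) ≤ HDI.Ex σ (fun prof =>
      (((cr k - cr (prof (opp p)))^(2*n) - (cr j - cr (prof (opp p)))^(2*n))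
        + 2*(φr (Function.update (vecOf prof p) (idx p) (cz k))
             - φr (Function.update (vecOf prof p) (idx p) (cz j))))
      + (((cr k' - cr (prof (opp p)))^(2*n) - (cr j' - cr (prof (opp p)))^(2*n))
        + 2*(φr (Function.update (vecOf prof p) (idx p) (cz k'))
             - φr (Function.update (vecOf prof p) (idx p) (cz j'))))) := by
    apply HDI.Ex_ge hσ.1.1 hσ.1.2
    intro prof hsup
    have hozs : cz (prof (opp p)) ∈ ZS σ (opp p) := mem_ZS (hsup (opp p))
    set o := cz (prof (opp p)) with hodef
    have houp : o ≤ K' + 1 := by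
      have := step1_up hn hφ0 hφB hσ (opp p) hozs
      rwa [show (ZS σ (opp (opp p))).max' (ZS_ne hσ.1.2 (opp (opp p)))
          = K' by rw [hK'def]; congr 1 <;> rw [opp_opp]] at this
    have hodown : K - 1 ≤ o := by
      have := step1_down hn hφ0 hφB hσ (opp p) hozs
      rwa [show (ZS σ (opp (opp p))).min' (ZS_ne hσ.1.2 (opp (opp p)))
          = K by rw [hKdef]; congr 1 <;> rw [opp_opp]] at this
    have ho29 : o ≤ 29 := (ZS_bounds hozs).2
    have ho0 : 0 ≤ o := (ZS_bounds hozs).1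
    have he : Even (2*n) := even_two_mul n
    -- dd1 = gap at s := o - K
    have e1 : (cr k - cr (prof (opp p)))^(2*n) = (((o - K : ℤ) : ℝ))^(2*n) := by
      rw [crz, crz, hkz]
      rw [show ((K:ℝ) - ((o:ℤ):ℝ)) = -(((o - K : ℤ):ℝ)) by push_cast; ring]
      rw [he.neg_pow]
    have e2 : (cr j - cr (prof (opp p)))^(2*n) = (((o - K : ℤ) : ℝ) - 1)^(2*n) := by
      rw [crz, crz, hcj]
      rw [show (((K+1:ℤ):ℝ) - ((o:ℤ):ℝ)) = -((((o - K : ℤ):ℝ)) - 1) by push_cast; ring]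
      rw [he.neg_pow]
    -- dd2 = gap at t := K' - o
    have e3 : (cr k' - cr (prof (opp p)))^(2*n) = (((K' - o : ℤ) : ℝ))^(2*n) := by
      rw [crz, crz, hkz']; push_cast; ring_nf; rfl
    have e4 : (cr j' - cr (prof (opp p)))^(2*n) = (((K' - o : ℤ) : ℝ) - 1)^(2*n) := by
      rw [crz, crz, hcj']; push_cast; ring_nf; rfl
    have hgap := HDIA.gapG hn (o - K) (K' - o) (by omega) (by omega) (by omega)
      (by omega) (by omega)
    have hphi1 := phi_budget hφ0 hφB prof p k j
    have hphi2 := phi_budget hφ0 hφB prof p k' j'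
    rw [e1, e2, e3, e4]
    linarith
  rw [hsum] at hge
  linarith
end HDIG

namespace HDIG

variable {n : ℕ} {φr : (Fin (n+1) → ℤ) → ℝ} {σ : Pl n → Fin 30 → ℝ}

lemma supports_pure (hn : 15 ≤ n)
    (hφ0 : ∀ x, inGrid n x → 0 ≤ φr x) (hφB : ∀ x, inGrid n x → φr x ≤ 200*2^n)
    (hint : ∀ x y : Fin (n+1) → ℤ, φr y < φr x → φr y + 1 ≤ φr x)
    (vstar : Fin (n+1) → ℤ)
    (hdom : ∀ v w, IsSmallCube n v w → ¬(v = vstar ∧ w = vstar) →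
      ∃ d, IsDominatingDir n φr v w d)
    (hσ : IsMixedNash (hdImitationU n φr) σ) :
    ∀ (p : Pl n) (a : Fin 30), σ p a ≠ 0 → cz a = vstar (idx p) := by
  have h1 := hσ.1.2
  have hUne : ∀ i : Fin (n+1),
      (ZS σ (Sum.inl i) ∪ ZS σ (Sum.inr i)).Nonempty := by
    intro i
    obtain ⟨z, hz⟩ := ZS_ne h1 (Sum.inl i)
    exact ⟨z, Finset.mem_union_left _ hz⟩
  set v : Fin (n+1) → ℤ :=
    fun i => (ZS σ (Sum.inl i) ∪ ZS σ (Sum.inr i)).min' (hUne i) with hvdef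
  set w : Fin (n+1) → ℤ :=
    fun i => (ZS σ (Sum.inl i) ∪ ZS σ (Sum.inr i)).max' (hUne i) with hwdef
  -- every support value of player q lies in [v (idx q), w (idx q)]
  have hZU : ∀ (q : Pl n) (z : ℤ), z ∈ ZS σ q → v (idx q) ≤ z ∧ z ≤ w (idx q) := by
    intro q z hz
    rcases q with i | i
    · exact ⟨Finset.min'_le _ _ (Finset.mem_union_left _ hz),
        Finset.le_max' _ _ (Finset.mem_union_left _ hz)⟩
    · exact ⟨Finset.min'_le _ _ (Finset.mem_union_right _ hz),
        Finset.le_max' _ _ (Finset.mem_union_right _ hz)⟩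
  have hgridv : inGrid n v := by
    intro i
    have := Finset.min'_mem _ (hUne i)
    rcases Finset.mem_union.mp this with h | h
    · exact ZS_bounds h
    · exact ZS_bounds h
  have hgridw : inGrid n w := by
    intro i
    have := Finset.max'_mem _ (hUne i)
    rcases Finset.mem_union.mp this with h | h
    · exact ZS_bounds h
    · exact ZS_bounds h
  have hvw : ∀ i, v i ≤ w i := by
    intro i
    exact Finset.min'_le _ _ (Finset.max'_mem _ (hUne i))
  -- narrowness
  have hvw3 : ∀ i, w i - v i ≤ 3 := by
    intro i
    set A := ZS σ (Sum.inl i) with hA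
    set B := ZS σ (Sum.inr i) with hB
    have hAne : A.Nonempty := ZS_ne h1 (Sum.inl i)
    have hBne : B.Nonempty := ZS_ne h1 (Sum.inr i)
    have hstep2A : A.max' hAne - A.min' hAne ≤ 2 := step2 hn hφ0 hφB hσ (Sum.inl i)
    have hstep2B : B.max' hBne - B.min' hBne ≤ 2 := step2 hn hφ0 hφB hσ (Sum.inr i)
    have hcross1 : A.min' hAne - 1 ≤ B.min' hBne := by
      have : (ZS σ (Sum.inl i)).min' (ZS_ne h1 (Sum.inl i)) - 1 ≤ B.min' hBne :=
        step1_down hn hφ0 hφB hσ (Sum.inr i) (Finset.min'_mem _ _)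
      exact this
    have hcross2 : B.min' hBne - 1 ≤ A.min' hAne := by
      have : (ZS σ (Sum.inr i)).min' (ZS_ne h1 (Sum.inr i)) - 1 ≤ A.min' hAne :=
        step1_down hn hφ0 hφB hσ (Sum.inl i) (Finset.min'_mem _ _)
      exact this
    have hwmem := Finset.max'_mem _ (hUne i)
    have hvmem := Finset.min'_mem _ (hUne i)
    have hwv : w i = (A ∪ B).max' (hUne i) := rfl
    have hvv : v i = (A ∪ B).min' (hUne i) := rfl
    rw [hwv, hvv]
    rcases Finset.mem_union.mp hwmem with hw1 | hw1 <;>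
      rcases Finset.mem_union.mp hvmem with hv1 | hv1
    · have e1 : (A ∪ B).max' (hUne i) ≤ A.max' hAne := Finset.le_max' _ _ hw1
      have e2 : A.min' hAne ≤ (A ∪ B).min' (hUne i) := Finset.min'_le _ _ hv1
      omega
    · have e1 : (A ∪ B).max' (hUne i) ≤ A.max' hAne := Finset.le_max' _ _ hw1
      have e2 : B.min' hBne ≤ (A ∪ B).min' (hUne i) := Finset.min'_le _ _ hv1
      omega
    · have e1 : (A ∪ B).max' (hUne i) ≤ B.max' hBne := Finset.le_max' _ _ hw1
      have e2 : A.min' hAne ≤ (A ∪ B).min' (hUne i) := Finset.min'_le _ _ hv1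
      omega
    · have e1 : (A ∪ B).max' (hUne i) ≤ B.max' hBne := Finset.le_max' _ _ hw1
      have e2 : B.min' hBne ≤ (A ∪ B).min' (hUne i) := Finset.min'_le _ _ hv1
      omega
  have hsc : IsSmallCube n v w := ⟨hgridv, hgridw, hvw, fun i => by have := hvw3 i; omega⟩
  -- support values of each player within the cube (for the own-vector coordinates)
  have hsupp : ∀ (q : Pl n) (a : Fin 30), σ q a ≠ 0 → v (idx q) ≤ cz a ∧ cz a ≤ w (idx q) :=
    fun q a ha => hZU q (cz a) (mem_ZS ha)
  -- membership of updated own-vectors in the cube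
  have hcube : ∀ (prof : Pl n → Fin 30), (∀ q, σ q (prof q) ≠ 0) → ∀ (p : Pl n) (z : ℤ),
      v (idx p) ≤ z → z ≤ w (idx p) →
      cubeMem n v w (Function.update (vecOf prof p) (idx p) z) := by
    intro prof hsup p z hz1 hz2
    have hz0 : 0 ≤ z := le_trans (hgridv (idx p)).1 hz1
    have hz29 : z ≤ 29 := le_trans hz2 (hgridw (idx p)).2
    refine ⟨grid_update prof p (idx p) hz0 hz29, ?_⟩
    intro i'
    rw [Function.update_apply]
    split
    · rename_i hii
      subst hii
      exact ⟨hz1, hz2⟩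
    · rcases p with i | i
      · have := hsupp (Sum.inl i') (prof (Sum.inl i')) (hsup (Sum.inl i'))
        exact this
      · have := hsupp (Sum.inr i') (prof (Sum.inr i')) (hsup (Sum.inr i'))
        exact this
  -- main dichotomy
  suffices hvwstar : v = vstar ∧ w = vstar by
    intro p a ha
    have hb := hsupp p a ha
    rw [hvwstar.1, hvwstar.2] at hb
    omega
  by_contra hvwstar
  obtain ⟨d, ⟨i0, hd1⟩, ⟨x0, hx0c, hx0g⟩, hdphi⟩ := hdom v w hsc hvwstar
  have he : Even (2*n) := even_two_mul n
  rcases hd1 with hd1 | hd1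
  · -- d = +e_{i0} : contradiction at the bottom of coordinate i0
    subst hd1
    have hfz : v i0 ≤ 28 := by
      have hg := (hx0g i0).2
      simp only [Pi.add_apply, Pi.single_eq_same] at hg
      have := (hx0c.2 i0).1
      omega
    have hvmem := Finset.min'_mem _ (hUne i0)
    have hget : ∃ p0 : Pl n, idx p0 = i0 ∧ ∃ k : Fin 30, σ p0 k ≠ 0 ∧ cz k = v i0 := by
      rcases Finset.mem_union.mp hvmem with h | h
      · exact ⟨Sum.inl i0, rfl, ZS_elem h⟩
      · exact ⟨Sum.inr i0, rfl, ZS_elem h⟩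
    obtain ⟨p0, hp0, k, hk, hkz⟩ := hget
    have hk28 : (k : ℕ) ≤ 28 := by
      have : ((k:ℕ):ℤ) ≤ 28 := by unfold cz at hkz; omega
      exact_mod_cast this
    obtain ⟨j, hjval⟩ : ∃ j : Fin 30, (j:ℕ) = (k:ℕ)+1 := ⟨⟨(k:ℕ)+1, by omega⟩, rfl⟩
    refine keyContra hσ p0 k j hk ?_
    intro prof hsup
    have hcj : cz j = v i0 + 1 := by
      unfold cz at hkz ⊢
      rw [hjval]
      omega
    have hozs : cz (prof (opp p0)) ∈ ZS σ (opp p0) := mem_ZS (hsup (opp p0))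
    have hoU := hZU (opp p0) _ hozs
    rw [idx_opp, hp0] at hoU
    have ho0m : v i0 ≤ cz (prof (opp p0)) := hoU.1
    set o := cz (prof (opp p0)) with hodef
    -- distance part
    have e1 : (cr k - cr (prof (opp p0)))^(2*n) = (((o - v i0 : ℤ) : ℝ))^(2*n) := by
      rw [crz, crz, hkz]
      rw [show (((v i0 : ℤ):ℝ) - ((o:ℤ):ℝ)) = -(((o - v i0 : ℤ):ℝ)) by push_cast; ring]
      rw [he.neg_pow]
    have e2 : (cr j - cr (prof (opp p0)))^(2*n) = (((o - v i0 : ℤ) : ℝ) - 1)^(2*n) := by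
      rw [crz, crz, hcj]
      rw [show (((v i0 + 1 : ℤ):ℝ) - ((o:ℤ):ℝ)) = -((((o - v i0 : ℤ):ℝ)) - 1) by push_cast; ring]
      rw [he.neg_pow]
    have hx0' : (0:ℝ) ≤ ((o - v i0 : ℤ):ℝ) := by exact_mod_cast (by omega : (0:ℤ) ≤ o - v i0)
    have hdd := HDIA.gap_gem1 (n := n) hx0'
    -- φ part
    have hXc : cubeMem n v w (Function.update (vecOf prof p0) (idx p0) (cz k)) := by
      apply hcube prof hsup p0
      · rw [hkz, hp0]
      · rw [hkz, hp0]; exact hvw i0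
    have hXd : Function.update (vecOf prof p0) (idx p0) (cz k) + Pi.single i0 1
        = Function.update (vecOf prof p0) (idx p0) (cz j) := by
      funext i'
      simp only [Pi.add_apply]
      rw [hcj, hkz, hp0]
      by_cases hii : i' = i0
      · subst hii
        rw [Function.update_self, Function.update_self, Pi.single_eq_same]
      · rw [Function.update_of_ne hii, Function.update_of_ne hii, Pi.single_eq_of_ne hii,
          add_zero]
    have hXg : inGrid n (Function.update (vecOf prof p0) (idx p0) (cz k) + Pi.single i0 1) := by
      rw [hXd]
      apply grid_update
      · rw [hcj]; have := (hgridv i0).1; omega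
      · rw [hcj]; omega
    have hdrop := hdphi _ hXc hXg
    rw [hXd] at hdrop
    have hphi1 := hint _ _ hdrop
    rw [e1, e2]
    linarith
  · -- d = -e_{i0} : contradiction at the top of coordinate i0
    subst hd1
    have hfz : 1 ≤ w i0 := by
      have hg := (hx0g i0).1
      simp only [Pi.add_apply, Pi.single_eq_same] at hg
      have := (hx0c.2 i0).2
      omega
    have hwmem := Finset.max'_mem _ (hUne i0)
    have hget : ∃ p0 : Pl n, idx p0 = i0 ∧ ∃ k : Fin 30, σ p0 k ≠ 0 ∧ cz k = w i0 := by
      rcases Finset.mem_union.mp hwmem with h | h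
      · exact ⟨Sum.inl i0, rfl, ZS_elem h⟩
      · exact ⟨Sum.inr i0, rfl, ZS_elem h⟩
    obtain ⟨p0, hp0, k, hk, hkz⟩ := hget
    have hk1 : 1 ≤ (k : ℕ) := by
      have : (1:ℤ) ≤ ((k:ℕ):ℤ) := by unfold cz at hkz; omega
      exact_mod_cast this
    obtain ⟨j, hjval⟩ : ∃ j : Fin 30, (j:ℕ) = (k:ℕ)-1 := ⟨⟨(k:ℕ)-1, by omega⟩, rfl⟩
    refine keyContra hσ p0 k j hk ?_
    intro prof hsup
    have hcj : cz j = w i0 - 1 := by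
      unfold cz at hkz ⊢
      rw [hjval]
      omega
    have hozs : cz (prof (opp p0)) ∈ ZS σ (opp p0) := mem_ZS (hsup (opp p0))
    have hoU := hZU (opp p0) _ hozs
    rw [idx_opp, hp0] at hoU
    have ho0m : cz (prof (opp p0)) ≤ w i0 := hoU.2
    set o := cz (prof (opp p0)) with hodef
    have e1 : (cr k - cr (prof (opp p0)))^(2*n) = (((w i0 - o : ℤ) : ℝ))^(2*n) := by
      rw [crz, crz, hkz]
      rw [show (((w i0 : ℤ):ℝ) - ((o:ℤ):ℝ)) = (((w i0 - o : ℤ):ℝ)) by push_cast; ring]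
    have e2 : (cr j - cr (prof (opp p0)))^(2*n) = (((w i0 - o : ℤ) : ℝ) - 1)^(2*n) := by
      rw [crz, crz, hcj]
      rw [show (((w i0 - 1 : ℤ):ℝ) - ((o:ℤ):ℝ)) = (((w i0 - o : ℤ):ℝ) - 1) by push_cast; ring]
    have hx0' : (0:ℝ) ≤ ((w i0 - o : ℤ):ℝ) := by exact_mod_cast (by omega : (0:ℤ) ≤ w i0 - o)
    have hdd := HDIA.gap_gem1 (n := n) hx0'
    have hXc : cubeMem n v w (Function.update (vecOf prof p0) (idx p0) (cz k)) := by
      apply hcube prof hsup p0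
      · rw [hkz, hp0]; exact hvw i0
      · rw [hkz, hp0]
    have hXd : Function.update (vecOf prof p0) (idx p0) (cz k) + Pi.single i0 (-1)
        = Function.update (vecOf prof p0) (idx p0) (cz j) := by
      funext i'
      simp only [Pi.add_apply]
      rw [hcj, hkz, hp0]
      by_cases hii : i' = i0
      · subst hii
        rw [Function.update_self, Function.update_self, Pi.single_eq_same]
        ring
      · rw [Function.update_of_ne hii, Function.update_of_ne hii, Pi.single_eq_of_ne hii,
          add_zero]
    have hXg : inGrid n (Function.update (vecOf prof p0) (idx p0) (cz k) + Pi.single i0 (-1)) := by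
      rw [hXd]
      apply grid_update
      · rw [hcj]; omega
      · rw [hcj]; have := (hgridw i0).2; omega
    have hdrop := hdphi _ hXc hXg
    rw [hXd] at hdrop
    have hphi1 := hint _ _ hdrop
    rw [e1, e2]
    linarith

end HDIG

/-- for all large enough `n`, if `φ : G_{n+1} → ℕ` is bounded by `200·2^n` and
every small cube except the singleton `C(v*,v*)` has a dominating direction, then the
high-degree imitation game associated with `φ` has a unique mixed Nash equilibrium,
namely the pure profile where everyone plays `v*` (i.e. `a = b = v*`). -/
theorem stmt1 :
    ∃ n₀ : ℕ, ∀ n : ℕ, n₀ ≤ n →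
      ∀ vstar : Fin (n+1) → ℤ, inGrid n vstar →
      ∀ φ : (Fin (n+1) → ℤ) → ℕ,
        (∀ x, inGrid n x → φ x ≤ 200 * 2 ^ n) →
        (∀ v w, IsSmallCube n v w → ¬(v = vstar ∧ w = vstar) →
          ∃ d, IsDominatingDir n (fun x => (φ x : ℝ)) v w d) →
        IsMixedNash (hdImitationU n (fun x => (φ x : ℝ)))
          (fun p (x : Fin 30) =>
            if ((x : ℕ) : ℤ) = vstar (Sum.elim id id p) then (1 : ℝ) else 0) ∧
        ∀ σ : (Fin (n+1) ⊕ Fin (n+1)) → Fin 30 → ℝ,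
          IsMixedNash (hdImitationU n (fun x => (φ x : ℝ))) σ →
          σ = fun p (x : Fin 30) =>
            if ((x : ℕ) : ℤ) = vstar (Sum.elim id id p) then (1 : ℝ) else 0 := by
  refine ⟨15, fun n hn vstar hvs φ hφb hdom => ?_⟩
  set φr : (Fin (n+1) → ℤ) → ℝ := fun x => (φ x : ℝ) with hφr
  have hφ0 : ∀ x, inGrid n x → 0 ≤ φr x := fun x _ => Nat.cast_nonneg _
  have hφB : ∀ x, inGrid n x → φr x ≤ 200*2^n := by
    intro x hx
    have := hφb x hx
    have h2 : ((φ x : ℕ) : ℝ) ≤ ((200 * 2^n : ℕ) : ℝ) := by exact_mod_cast this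
    calc φr x = ((φ x : ℕ) : ℝ) := rfl
      _ ≤ ((200 * 2^n : ℕ) : ℝ) := h2
      _ = 200*2^n := by push_cast; ring
  have hint : ∀ x y : Fin (n+1) → ℤ, φr y < φr x → φr y + 1 ≤ φr x := by
    intro x y h
    have h1 : φ y < φ x := by
      simp only [hφr] at h
      exact_mod_cast h
    have h2 : φ y + 1 ≤ φ x := h1
    calc φr y + 1 = ((φ y + 1 : ℕ) : ℝ) := by push_cast; ring
      _ ≤ ((φ x : ℕ) : ℝ) := by exact_mod_cast h2
      _ = φr x := rfl
  -- vstar is a global minimum of φ on the grid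
  have hminφ : ∀ x, inGrid n x → φr vstar ≤ φr x := by
    set gridF : Finset (Fin (n+1) → ℤ) :=
      Finset.image (fun f : Fin (n+1) → Fin 30 => fun i => HDIG.cz (f i)) Finset.univ with hgF
    have hmem : ∀ x : Fin (n+1) → ℤ, inGrid n x ↔ x ∈ gridF := by
      intro x
      constructor
      · intro hx
        rw [hgF, Finset.mem_image]
        refine ⟨fun i => ⟨(x i).toNat, ?_⟩, Finset.mem_univ _, ?_⟩
        · have := hx i; omega
        · funext i
          have := hx i
          unfold HDIG.cz
          simp only
          omega
      · intro hx
        rw [hgF, Finset.mem_image] at hx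
        obtain ⟨f, _, rfl⟩ := hx
        intro i
        exact ⟨HDIG.cz_nonneg (f i), HDIG.cz_le29 (f i)⟩
    obtain ⟨x₀, hx₀mem, hx₀min⟩ := Finset.exists_min_image gridF φ ⟨vstar, (hmem vstar).mp hvs⟩
    have hx₀star : x₀ = vstar := by
      by_contra hne
      obtain ⟨d, _, ⟨x, hxc, hxg⟩, hlt⟩ := hdom x₀ x₀
        ⟨(hmem x₀).mpr hx₀mem, (hmem x₀).mpr hx₀mem, fun i => le_refl _, fun i => by omega⟩
        (by intro h; exact hne h.1)
      have hxx : x = x₀ := by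
        funext i
        exact le_antisymm (hxc.2 i).2 (hxc.2 i).1
      subst hxx
      have hlt2 := hlt x hxc hxg
      have : φ (x + d) < φ x := by
        simp only [hφr] at hlt2
        exact_mod_cast hlt2
      have := hx₀min (x + d) ((hmem _).mp hxg)
      omega
    intro x hx
    have := hx₀min x ((hmem x).mp hx)
    rw [hx₀star] at this
    simp only [hφr]
    exact_mod_cast this
  -- the pure profile
  have hastar : ∀ q : HDIG.Pl n, ∃ a : Fin 30, HDIG.cz a = vstar (HDIG.idx q) := by
    intro q
    have := hvs (HDIG.idx q)
    refine ⟨⟨(vstar (HDIG.idx q)).toNat, by omega⟩, ?_⟩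
    unfold HDIG.cz
    simp only
    omega
  choose astar hcza using hastar
  have hσeq : (fun p (x : Fin 30) =>
      if ((x : ℕ) : ℤ) = vstar (Sum.elim id id p) then (1 : ℝ) else 0)
      = fun q => purePlay (astar q) := by
    funext q x
    show (if HDIG.cz x = vstar (HDIG.idx q) then (1:ℝ) else 0) = purePlay (astar q) x
    unfold purePlay
    by_cases h : x = astar q
    · subst h
      rw [if_pos (hcza q), if_pos rfl]
    · rw [if_neg h, if_neg]
      intro hc
      exact h (HDIG.cz_inj (hc.trans (hcza q).symm))
  have hvecstar : ∀ p : HDIG.Pl n, HDIG.vecOf astar p = vstar := by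
    intro p
    funext i'
    rcases p with i | i
    · exact hcza (Sum.inl i')
    · exact hcza (Sum.inr i')
  have hNE : IsMixedNash (hdImitationU n φr) (fun q => purePlay (astar q)) := by
    constructor
    · constructor
      · intro q a
        show (0:ℝ) ≤ purePlay (astar q) a
        unfold purePlay
        split <;> norm_num
      · intro q
        exact HDI.purePlay_sum (astar q)
    · intro p a'
      have e1 : expUtil (hdImitationU n φr) (fun q => purePlay (astar q)) p
          = hdImitationU n φr p astar := by
        rw [HDI.expUtil_eq_Ex]
        exact HDI.Ex_pure _
      have e2 : Function.update (fun q => purePlay (astar q)) p (purePlay a')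
          = fun q => purePlay (Function.update astar p a' q) := by
        funext q
        rcases eq_or_ne q p with rfl | h
        · rw [Function.update_self, Function.update_self]
        · rw [Function.update_of_ne h, Function.update_of_ne h]
      have e3 : expUtil (hdImitationU n φr)
          (Function.update (fun q => purePlay (astar q)) p (purePlay a')) p
          = hdImitationU n φr p (Function.update astar p a') := by
        rw [HDI.expUtil_eq_Ex, e2]
        exact HDI.Ex_pure _
      rw [ge_iff_le, e1, e3]
      have hd := HDIG.udiff φr p astar a' (astar p)
      rw [Function.update_eq_self] at hd
      have hzero : (HDIG.cr (astar p) - HDIG.cr (astar (HDIG.opp p)))^(2*n) = 0 := by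
        rw [HDIG.crz, HDIG.crz, hcza, hcza, HDIG.idx_opp, sub_self]
        exact zero_pow (by omega)
      have hpos : 0 ≤ (HDIG.cr a' - HDIG.cr (astar (HDIG.opp p)))^(2*n) := by
        rw [pow_mul]
        exact pow_nonneg (sq_nonneg _) n
      have hupk : Function.update (HDIG.vecOf astar p) (HDIG.idx p) (HDIG.cz (astar p))
          = vstar := by
        rw [hvecstar, hcza]
        exact Function.update_eq_self _ _
      have hgrid' : inGrid n (Function.update (HDIG.vecOf astar p) (HDIG.idx p)
          (HDIG.cz a')) :=
        HDIG.grid_update astar p (HDIG.idx p) (HDIG.cz_nonneg a') (HDIG.cz_le29 a')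
      have hphige : φr vstar ≤ φr (Function.update (HDIG.vecOf astar p) (HDIG.idx p)
          (HDIG.cz a')) := hminφ _ hgrid'
      rw [hzero, hupk] at hd
      linarith
  constructor
  · rw [hσeq]
    exact hNE
  · intro σ hσ
    have hps := HDIG.supports_pure hn hφ0 hφB hint vstar hdom hσ
    funext p x
    show σ p x = if HDIG.cz x = vstar (HDIG.idx p) then (1:ℝ) else 0
    by_cases hx : HDIG.cz x = vstar (HDIG.idx p)
    · rw [if_pos hx]
      have hsum := hσ.1.2 p
      have hz : ∀ b ∈ Finset.univ, b ≠ x → σ p b = 0 := by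
        intro b _ hb
        by_contra hnz
        have := hps p b hnz
        exact hb (HDIG.cz_inj (this.trans hx.symm))
      rw [Finset.sum_eq_single x hz (fun h => absurd (Finset.mem_univ x) h)] at hsum
      exact hsum
    · rw [if_neg hx]
      by_contra hnz
      exact hx (hps p x hnz)
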